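/- Let M be an NFA with L(M) ⊆ Enc and let rep_M be a token-preserving representative function for M. Let rep_M(Q²) = ⋃_{q,q'∈Q} rep_M(q, q'), let rep^E_M(Q²) = ⋃_{p,q,r∈Q} rep_M(p, q)·rep_M(q, r) (the set of edge factors), let m = |rep^E_M(Q²)|, let n = max{|w| : w ∈ rep_M(Q²)}, and let ℓ = |Q|²·(m+2)·m·2n + n. Then decode({w ∈ L(M̂_{rep_M}) : |w| ≤ ℓ}) = decode(L(M̂_{rep_M})), i.e., every pair (graph, threshold) decoded from a word of L(M̂_{rep_M}) is already decoded from a word of L(M̂_{rep_M}) of length at most ℓ. -/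

import Mathlib

/-- The fixed five-letter alphabet Σ = {▷, 1, a, #, $}. -/
inductive Letter : Type
  | tri    -- ▷
  | one    -- 1
  | lett   -- a
  | hash   -- #
  | dollar -- $
deriving DecidableEq

/-- Words over the alphabet Σ. -/
abbrev Word := List Letter

/-- A nondeterministic finite automaton over the fixed alphabet `Letter`,
with state type `Q` (assumed finite via a `Fintype` instance where needed),
transition function `δ`, initial state `q0` and final states `F`. -/
structure NFA' (Q : Type) where
  δ : Q → Letter → Set Q
  q0 : Q
  F : Set Q

namespace NFA'

variable {Q : Type}

/-- One step of the transition function on a set of states. -/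
def stepSet (M : NFA' Q) (S : Set Q) (x : Letter) : Set Q := ⋃ q ∈ S, M.δ q x

/-- The extension of the transition function to words (acting on sets of states). -/
def evalFrom (M : NFA' Q) (S : Set Q) (w : Word) : Set Q := w.foldl M.stepSet S

/-- The language accepted by `M`. -/
def lang (M : NFA' Q) : Set Word := { w | ∃ q ∈ M.F, q ∈ M.evalFrom {M.q0} w }

/-- The automaton `M[p, q]`: same transitions, initial state `p`, unique final state `q`. -/
def between (M : NFA' Q) (p q : Q) : NFA' Q := ⟨M.δ, p, {q}⟩

/-- Every state is reachable from the initial state. -/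
def Reachable (M : NFA' Q) : Prop := ∀ q : Q, ∃ w : Word, q ∈ M.evalFrom {M.q0} w

/-- From every state some final state can be reached. -/
def CoReachable (M : NFA' Q) : Prop :=
  ∀ q : Q, ∃ w : Word, ∃ f ∈ M.F, f ∈ M.evalFrom {q} w

end NFA'

/-- `rep` is a representative function for `M`: each `rep p q` is a finite subset
of `L(M[p, q])`. -/
def IsRepFun {Q : Type} (M : NFA' Q) (rep : Q → Q → Set Word) : Prop :=
  ∀ p q : Q, (rep p q).Finite ∧ rep p q ⊆ (M.between p q).lang

/-- The language `L(M̂_rep)`: all words obtained by concatenating representatives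
along a path from the initial state to a final state. -/
def hatLang {Q : Type} (M : NFA' Q) (rep : Q → Q → Set Word) : Set Word :=
  { w | ∃ (m : ℕ) (u : Fin m → Word) (qs : Fin (m + 1) → Q),
      qs 0 = M.q0 ∧ qs (Fin.last m) ∈ M.F ∧
      (∀ i : Fin m, u i ∈ rep (qs i.castSucc) (qs i.succ)) ∧
      w = (List.ofFn u).flatten }

/-- The threshold token `▷1^k$`. -/
def thresholdTok (k : ℕ) : Word := Letter.tri :: (List.replicate k Letter.one ++ [Letter.dollar])

/-- The left vertex token `▷a^p#`. -/
def leftTok (p : ℕ) : Word := Letter.tri :: (List.replicate p Letter.lett ++ [Letter.hash])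

/-- The right vertex token `▷a^q$`. -/
def rightTok (q : ℕ) : Word := Letter.tri :: (List.replicate q Letter.lett ++ [Letter.dollar])

/-- The encoding `▷1^k$ ∏_i (▷a^{p_i}# ▷a^{q_i}$)` of a threshold `k` together with a
list of (encoded) edges. -/
def encode (k : ℕ) (es : List (ℕ × ℕ)) : Word :=
  thresholdTok k ++ (es.map (fun e => leftTok e.1 ++ rightTok e.2)).flatten

/-- The regular language `Enc = ▷1*$(▷a*#▷a*$)*` of all encodings. -/
def Enc : Set Word := { w | ∃ (k : ℕ) (es : List (ℕ × ℕ)), w = encode k es }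

/-- A token: a threshold token, a left vertex token, or a right vertex token. -/
def IsToken (w : Word) : Prop :=
  (∃ k, w = thresholdTok k) ∨ (∃ p, w = leftTok p) ∨ (∃ q, w = rightTok q)

/-- A representative function is token-preserving if all representatives are tokens. -/
def TokenPreserving {Q : Type} (rep : Q → Q → Set Word) : Prop :=
  ∀ p q : Q, ∀ w ∈ rep p q, IsToken w

/-- A finite simple undirected graph with vertices named by natural numbers:
a finite vertex set and a finite set of undirected edges. -/
structure Graph' where
  V : Finset ℕ
  E : Finset (Sym2 ℕ)

/-- `G` has a vertex cover of size at most `k`. -/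
def HasVC (G : Graph') (k : ℕ) : Prop :=
  ∃ S : Finset ℕ, S ⊆ G.V ∧ S.card ≤ k ∧ ∀ e ∈ G.E, ∃ a ∈ S, a ∈ e

/-- `G` has an independent set of size at least `k`. -/
def HasIS (G : Graph') (k : ℕ) : Prop :=
  ∃ S : Finset ℕ, S ⊆ G.V ∧ k ≤ S.card ∧ ∀ a ∈ S, ∀ b ∈ S, s(a, b) ∉ G.E

/-- The graph described by a list of (encoded) edges: vertices are all the numbers
occurring, edges are the non-loop pairs. -/
def graphOf (es : List (ℕ × ℕ)) : Graph' where
  V := (es.map Prod.fst).toFinset ∪ (es.map Prod.snd).toFinset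
  E := ((es.filter (fun e => e.1 ≠ e.2)).map (fun e => s(e.1, e.2))).toFinset

/-- `decode(w) = (G, k)` : the word `w ∈ Enc` encodes the graph `G` and threshold `k`. -/
def decodesTo (w : Word) (G : Graph') (k : ℕ) : Prop :=
  ∃ es : List (ℕ × ℕ), w = encode k es ∧ G = graphOf es

/-- The set of all representatives `rep_M(Q²)`. -/
def allReps {Q : Type} (rep : Q → Q → Set Word) : Set Word := ⋃ p : Q, ⋃ q : Q, rep p q

/-- The set `rep^E_M(Q²)` of all edge factors: concatenations of a representative for
`(p, q)` with one for `(q, r)`. -/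
def edgeFactors {Q : Type} (rep : Q → Q → Set Word) : Set Word :=
  ⋃ p : Q, ⋃ q : Q, ⋃ r : Q, { w | ∃ x ∈ rep p q, ∃ y ∈ rep q r, w = x ++ y }

namespace Stmt3Aux

/-! ### Tokens and unique tokenization -/

lemma token_shape {t : Word} (h : IsToken t) :
    ∃ (a : ℕ) (c d : Letter), (c = .one ∨ c = .lett) ∧ (d = .hash ∨ d = .dollar) ∧
      t = .tri :: (List.replicate a c ++ [d]) := by
  rcases h with ⟨k, rfl⟩ | ⟨p, rfl⟩ | ⟨q, rfl⟩
  · exact ⟨k, .one, .dollar, Or.inl rfl, Or.inr rfl, rfl⟩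
  · exact ⟨p, .lett, .hash, Or.inr rfl, Or.inl rfl, rfl⟩
  · exact ⟨q, .lett, .dollar, Or.inr rfl, Or.inr rfl, rfl⟩

lemma token_nonempty {t : Word} (h : IsToken t) : t ≠ [] := by
  obtain ⟨a, c, d, _, _, rfl⟩ := token_shape h; simp

lemma core : ∀ (a b : ℕ) (c c' d d' : Letter) (r r' : Word),
    (c = .one ∨ c = .lett) → (c' = .one ∨ c' = .lett) →
    (d = .hash ∨ d = .dollar) → (d' = .hash ∨ d' = .dollar) →
    List.replicate a c ++ d :: r = List.replicate b c' ++ d' :: r' →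
    a = b ∧ d = d' ∧ r = r' := by
  intro a
  induction a with
  | zero =>
    intro b c c' d d' r r' hc hc' hd hd' h
    cases b with
    | zero => simpa using h
    | succ b =>
      exfalso
      rw [List.replicate_succ] at h
      simp only [List.nil_append, List.cons_append, List.cons.injEq] at h
      rcases hd with rfl | rfl <;> rcases hc' with rfl | rfl <;> simp_all
  | succ a ih =>
    intro b c c' d d' r r' hc hc' hd hd' h
    cases b with
    | zero =>
      exfalso
      rw [List.replicate_succ] at h
      simp only [List.nil_append, List.cons_append, List.cons.injEq] at h
      rcases hd' with rfl | rfl <;> rcases hc with rfl | rfl <;> simp_all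
    | succ b =>
      rw [List.replicate_succ, List.replicate_succ] at h
      simp only [List.cons_append, List.cons.injEq] at h
      obtain ⟨-, h2⟩ := h
      obtain ⟨h1, h3, h4⟩ := ih b c c' d d' r r' hc hc' hd hd' h2
      exact ⟨by omega, h3, h4⟩

lemma token_head_eq {t s : Word} (ht : IsToken t) (hs : IsToken s) {r1 r2 : Word}
    (h : t ++ r1 = s ++ r2) : t = s ∧ r1 = r2 := by
  obtain ⟨a, c, d, hc, hd, rfl⟩ := token_shape ht
  obtain ⟨b, c', d', hc', hd', rfl⟩ := token_shape hs
  simp only [List.cons_append, List.append_assoc, List.singleton_append,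
    List.cons.injEq, true_and] at h
  obtain ⟨hab, hdd, hrr⟩ := core a b c c' d d' r1 r2 hc hc' hd hd' h
  subst hab hdd hrr
  have h2 : List.replicate a c = List.replicate a c' :=
    List.append_inj_left h (by simp)
  rw [h2]
  exact ⟨rfl, rfl⟩

lemma tok_flatten_inj : ∀ (A B : List Word), (∀ t ∈ A, IsToken t) → (∀ t ∈ B, IsToken t) →
    A.flatten = B.flatten → A = B := by
  intro A
  induction A with
  | nil =>
    intro B _ hB h
    cases B with
    | nil => rfl
    | cons s B' =>
      exfalso
      have hs := token_nonempty (hB s (by simp))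
      simp only [List.flatten_nil, List.flatten_cons] at h
      exact hs (List.append_eq_nil_iff.mp h.symm).1
  | cons t A' ih =>
    intro B hA hB h
    cases B with
    | nil =>
      exfalso
      have hs := token_nonempty (hA t (by simp))
      simp only [List.flatten_nil, List.flatten_cons] at h
      exact hs (List.append_eq_nil_iff.mp h).1
    | cons s B' =>
      simp only [List.flatten_cons] at h
      obtain ⟨rfl, h2⟩ := token_head_eq (hA t (by simp)) (hB s (by simp)) h
      rw [ih B' (fun x hx => hA x (by simp [hx])) (fun x hx => hB x (by simp [hx])) h2]

lemma thresholdTok_isToken (k : ℕ) : IsToken (thresholdTok k) := Or.inl ⟨k, rfl⟩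
lemma leftTok_isToken (p : ℕ) : IsToken (leftTok p) := Or.inr (Or.inl ⟨p, rfl⟩)
lemma rightTok_isToken (q : ℕ) : IsToken (rightTok q) := Or.inr (Or.inr ⟨q, rfl⟩)

/-- The edge factor of a pair. -/
def gEdge (e : ℕ × ℕ) : Word := leftTok e.1 ++ rightTok e.2

lemma gEdge_inj : Function.Injective gEdge := by
  intro e e' h
  obtain ⟨h1, h2⟩ := token_head_eq (leftTok_isToken _) (leftTok_isToken _) h
  have hp : e.1 = e'.1 := by
    have := congrArg List.length h1
    simpa [leftTok] using this
  have hq : e.2 = e'.2 := by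
    have := congrArg List.length h2
    simpa [rightTok] using this
  exact Prod.ext hp hq

/-! ### Runs -/

variable {Q : Type}

def finSt {α : Type} (p : Q) (z : List (α × Q)) : Q := z.foldl (fun _ x => x.2) p

@[simp] lemma finSt_nil {α : Type} (p : Q) : finSt p ([] : List (α × Q)) = p := rfl
@[simp] lemma finSt_cons {α : Type} (p : Q) (x : α × Q) (z : List (α × Q)) :
    finSt p (x :: z) = finSt x.2 z := rfl
lemma finSt_append {α : Type} (p : Q) (z1 z2 : List (α × Q)) :
    finSt p (z1 ++ z2) = finSt (finSt p z1) z2 := by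
  simp [finSt, List.foldl_append]

def TRun (rep : Q → Q → Set Word) : Q → List (Word × Q) → Prop
  | _, [] => True
  | p, x :: z => x.1 ∈ rep p x.2 ∧ TRun rep x.2 z

@[simp] lemma TRun_nil (rep : Q → Q → Set Word) (p : Q) : TRun rep p [] := trivial
@[simp] lemma TRun_cons (rep : Q → Q → Set Word) (p : Q) (x : Word × Q) (z : List (Word × Q)) :
    TRun rep p (x :: z) ↔ x.1 ∈ rep p x.2 ∧ TRun rep x.2 z := Iff.rfl

def Edge (rep : Q → Q → Set Word) (a : Q) (e : ℕ × ℕ) (b : Q) : Prop :=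
  ∃ r, leftTok e.1 ∈ rep a r ∧ rightTok e.2 ∈ rep r b

def ERun (rep : Q → Q → Set Word) : Q → List ((ℕ × ℕ) × Q) → Prop
  | _, [] => True
  | p, x :: z => Edge rep p x.1 x.2 ∧ ERun rep x.2 z

@[simp] lemma ERun_nil (rep : Q → Q → Set Word) (p : Q) : ERun rep p [] := trivial
@[simp] lemma ERun_cons (rep : Q → Q → Set Word) (p : Q) (x : (ℕ × ℕ) × Q)
    (z : List ((ℕ × ℕ) × Q)) :
    ERun rep p (x :: z) ↔ Edge rep p x.1 x.2 ∧ ERun rep x.2 z := Iff.rfl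

lemma ofFn_trun (rep : Q → Q → Set Word) :
    ∀ (mm : ℕ) (u : Fin mm → Word) (qs : Fin (mm + 1) → Q),
    (∀ i : Fin mm, u i ∈ rep (qs i.castSucc) (qs i.succ)) →
    TRun rep (qs 0) (List.ofFn fun i => (u i, qs i.succ)) ∧
      finSt (qs 0) (List.ofFn fun i => (u i, qs i.succ)) = qs (Fin.last mm) := by
  intro mm
  induction mm with
  | zero =>
    intro u qs _
    simp only [List.ofFn_zero]
    exact ⟨trivial, rfl⟩
  | succ mm ih =>
    intro u qs h
    rw [List.ofFn_succ]
    obtain ⟨ih1, ih2⟩ := ih (fun i => u i.succ) (fun i => qs i.succ) (fun i => by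
      have := h i.succ; rwa [← Fin.succ_castSucc] at this)
    constructor
    · exact ⟨by simpa using h 0, ih1⟩
    · rw [finSt_cons]
      rw [ih2]
      simp [Fin.succ_last]
  
lemma trun_to_fn (rep : Q → Q → Set Word) : ∀ (z : List (Word × Q)) (p : Q), TRun rep p z →
    ∃ (u : Fin z.length → Word) (qs : Fin (z.length + 1) → Q),
      qs 0 = p ∧ qs (Fin.last z.length) = finSt p z ∧
      (∀ i, u i ∈ rep (qs i.castSucc) (qs i.succ)) ∧
      (List.ofFn u).flatten = (z.map Prod.fst).flatten := by
  intro z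
  induction z with
  | nil => exact fun p _ => ⟨fun i => i.elim0, fun _ => p, rfl, rfl, fun i => i.elim0, rfl⟩
  | cons x z ih =>
    intro p hz
    obtain ⟨u', qs', h0, hl, hstep, hfl⟩ := ih x.2 hz.2
    refine ⟨Fin.cases x.1 u', Fin.cases p qs', by simp, ?_, ?_, ?_⟩
    · show (Fin.cases p qs' (Fin.last (z.length + 1)) : Q) = finSt x.2 z
      rw [← Fin.succ_last, Fin.cases_succ, hl]
    · intro i
      induction i using Fin.cases with
      | zero =>
        simp only [Fin.castSucc_zero, Fin.cases_zero, Fin.cases_succ, h0]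
        exact hz.1
      | succ j => rw [← Fin.succ_castSucc]; exact hstep j
    · rw [List.ofFn_succ]
      simp only [Fin.cases_zero, Fin.cases_succ, List.flatten_cons, List.map_cons]
      rw [hfl]

lemma hatLang_iff (M : NFA' Q) (rep : Q → Q → Set Word) (w : Word) :
    w ∈ hatLang M rep ↔ ∃ z : List (Word × Q), TRun rep M.q0 z ∧ finSt M.q0 z ∈ M.F ∧
      w = (z.map Prod.fst).flatten := by
  constructor
  · rintro ⟨mm, u, qs, h0, hF, hstep, rfl⟩
    obtain ⟨h1, h2⟩ := ofFn_trun rep mm u qs hstep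
    rw [h0] at h1 h2
    refine ⟨List.ofFn fun i => (u i, qs i.succ), h1, h2 ▸ hF, ?_⟩
    rw [List.map_ofFn]
    rfl
  · rintro ⟨z, hz, hF, rfl⟩
    obtain ⟨u, qs, h0, hl, hstep, hfl⟩ := trun_to_fn rep z M.q0 hz
    exact ⟨z.length, u, qs, h0, hl ▸ hF, hstep, hfl.symm⟩

/-! ### Between token runs and edge runs -/

def blk (e : ℕ × ℕ) : List Word := [leftTok e.1, rightTok e.2]

lemma t2e (rep : Q → Q → Set Word) : ∀ (es : List (ℕ × ℕ)) (z : List (Word × Q)) (p : Q),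
    TRun rep p z → z.map Prod.fst = es.flatMap blk →
    ∃ y : List ((ℕ × ℕ) × Q), ERun rep p y ∧ finSt p y = finSt p z ∧ y.map Prod.fst = es := by
  intro es
  induction es with
  | nil =>
    intro z p _ h
    rw [List.flatMap_nil] at h
    rw [List.map_eq_nil_iff] at h
    subst h
    exact ⟨[], trivial, rfl, rfl⟩
  | cons e es ih =>
    intro z p hz hmap
    cases z with
    | nil => simp [blk] at hmap
    | cons a z1 =>
      cases z1 with
      | nil => simp [blk] at hmap
      | cons b z2 =>
        simp only [List.map_cons, List.flatMap_cons, blk, List.cons_append, List.nil_append,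
          List.cons.injEq] at hmap
        obtain ⟨ha, hb, hrest⟩ := hmap
        obtain ⟨y, hy1, hy2, hy3⟩ := ih z2 b.2 hz.2.2 hrest
        refine ⟨(e, b.2) :: y, ⟨⟨a.2, ha ▸ hz.1, hb ▸ hz.2.1⟩, hy1⟩, ?_, by simp [hy3]⟩
        simpa using hy2

lemma e2t (rep : Q → Q → Set Word) : ∀ (y : List ((ℕ × ℕ) × Q)) (p : Q), ERun rep p y →
    ∃ z : List (Word × Q), TRun rep p z ∧ finSt p z = finSt p y ∧
      z.map Prod.fst = (y.map Prod.fst).flatMap blk := by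
  intro y
  induction y with
  | nil => exact fun p _ => ⟨[], trivial, rfl, rfl⟩
  | cons x y ih =>
    intro p hy
    obtain ⟨r, h1, h2⟩ := hy.1
    obtain ⟨z, hz1, hz2, hz3⟩ := ih x.2 hy.2
    exact ⟨(leftTok x.1.1, r) :: (rightTok x.1.2, x.2) :: z, ⟨h1, h2, hz1⟩,
      by simpa using hz2, by simp [blk, hz3]⟩

lemma erun_append (rep : Q → Q → Set Word) : ∀ (y1 y2 : List ((ℕ × ℕ) × Q)) (p : Q),
    ERun rep p (y1 ++ y2) ↔ ERun rep p y1 ∧ ERun rep (finSt p y1) y2 := by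
  intro y1
  induction y1 with
  | nil => intro y2 p; simp
  | cons x y ih =>
    intro y2 p
    simp [ih, and_assoc]

/-! ### Membership facts -/

lemma mem_allReps {rep : Q → Q → Set Word} {p q : Q} {w : Word} (h : w ∈ rep p q) :
    w ∈ allReps rep :=
  Set.mem_iUnion.mpr ⟨p, Set.mem_iUnion.mpr ⟨q, h⟩⟩

lemma trun_mem (rep : Q → Q → Set Word) : ∀ (z : List (Word × Q)) (p : Q), TRun rep p z →
    ∀ x ∈ z, x.1 ∈ allReps rep := by
  intro z
  induction z with
  | nil => intro p _ x hx; simp at hx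
  | cons a z ih =>
    intro p hz x hx
    rcases List.mem_cons.mp hx with rfl | hx'
    · exact mem_allReps hz.1
    · exact ih a.2 hz.2 x hx'

lemma erun_mem_edgeFactors (rep : Q → Q → Set Word) : ∀ (y : List ((ℕ × ℕ) × Q)) (p : Q),
    ERun rep p y → ∀ e ∈ y.map Prod.fst, gEdge e ∈ edgeFactors rep := by
  intro y
  induction y with
  | nil => intro p _ e he; simp at he
  | cons x y ih =>
    intro p hy e he
    have he2 : e = x.1 ∨ e ∈ y.map Prod.fst := by
      rw [List.map_cons, List.mem_cons] at he; exact he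
    rcases he2 with rfl | he'
    · obtain ⟨r, h1, h2⟩ := hy.1
      exact Set.mem_iUnion.mpr ⟨p, Set.mem_iUnion.mpr ⟨r, Set.mem_iUnion.mpr
        ⟨x.2, ⟨_, h1, _, h2, rfl⟩⟩⟩⟩
    · exact ih x.2 hy.2 e he'

lemma erun_len {rep : Q → Q → Set Word} {n : ℕ} (hlen : ∀ w ∈ allReps rep, w.length ≤ n) :
    ∀ (y : List ((ℕ × ℕ) × Q)) (p : Q), ERun rep p y →
    (((y.map Prod.fst).map gEdge).flatten).length ≤ y.length * (2 * n) := by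
  intro y
  induction y with
  | nil => intro p _; simp
  | cons x y ih =>
    intro p hy
    obtain ⟨r, h1, h2⟩ := hy.1
    have e1 := hlen _ (mem_allReps h1)
    have e2 := hlen _ (mem_allReps h2)
    have := ih x.2 hy.2
    have hmul : (y.length + 1) * (2 * n) = y.length * (2 * n) + 2 * n := by ring
    simp only [List.map_cons, List.flatten_cons, List.length_append, List.length_cons, gEdge,
      hmul]
    linarith

/-! ### The pumping (shortening) lemma -/

lemma pump (rep : Q → Q → Set Word) [Fintype Q] :
    ∀ (N : ℕ) (y : List ((ℕ × ℕ) × Q)) (p : Q), y.length ≤ N → ERun rep p y →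
    ∃ y', ERun rep p y' ∧ finSt p y' = finSt p y ∧
      (y'.map Prod.fst).toFinset = (y.map Prod.fst).toFinset ∧
      y'.length ≤ Fintype.card Q * ((y.map Prod.fst).toFinset.card + 1) := by
  intro N
  induction N with
  | zero =>
    intro y p hlen hrun
    exact ⟨y, hrun, rfl, rfl, by omega⟩
  | succ N ih =>
    intro y p hlen hrun
    by_cases hshort : y.length ≤ Fintype.card Q * ((y.map Prod.fst).toFinset.card + 1)
    · exact ⟨y, hrun, rfl, rfl, hshort⟩
    push_neg at hshort
    set K := (y.map Prod.fst).toFinset.card with hK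
    have hKmem : ∀ i : ℕ, (((y.take i).map Prod.fst).toFinset).card < K + 1 := by
      intro i
      have hsub : ((y.take i).map Prod.fst).toFinset ⊆ (y.map Prod.fst).toFinset := by
        intro a ha
        simp only [List.mem_toFinset, List.mem_map] at ha ⊢
        obtain ⟨x, hx, rfl⟩ := ha
        exact ⟨x, List.mem_of_mem_take hx, rfl⟩
      have := Finset.card_le_card hsub
      omega
    have hcard : Fintype.card (Q × Fin (K + 1)) < Fintype.card (Fin (y.length + 1)) := by
      simp only [Fintype.card_prod, Fintype.card_fin]
      omega
    obtain ⟨i, j, hne, hij⟩ := Fintype.exists_ne_map_eq_of_card_lt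
      (fun i : Fin (y.length + 1) =>
        ((finSt p (y.take i), ⟨((y.take (i : ℕ)).map Prod.fst).toFinset.card, hKmem i⟩) :
          Q × Fin (K + 1))) hcard
    obtain ⟨i, j, hlt, heq⟩ : ∃ i j : Fin (y.length + 1), i < j ∧
        finSt p (y.take (i : ℕ)) = finSt p (y.take (j : ℕ)) ∧
        ((y.take (i : ℕ)).map Prod.fst).toFinset.card =
          ((y.take (j : ℕ)).map Prod.fst).toFinset.card := by
      simp only [Prod.mk.injEq, Fin.mk.injEq] at hij
      rcases Ne.lt_or_gt hne with h | h
      · exact ⟨i, j, h, hij.1, hij.2⟩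
      · exact ⟨j, i, h, hij.1.symm, hij.2.symm⟩
    obtain ⟨hst, hcardeq⟩ := heq
    have hij' : (i : ℕ) < (j : ℕ) := hlt
    have hjle : (j : ℕ) ≤ y.length := by omega
    have hsub : ((y.take (i : ℕ)).map Prod.fst).toFinset ⊆
        ((y.take (j : ℕ)).map Prod.fst).toFinset := by
      intro a ha
      simp only [List.mem_toFinset, List.mem_map] at ha ⊢
      obtain ⟨x, hx, rfl⟩ := ha
      refine ⟨x, ?_, rfl⟩
      have : y.take (i : ℕ) = (y.take (j : ℕ)).take (i : ℕ) := by
        rw [List.take_take, min_eq_left (le_of_lt hij')]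
      rw [this] at hx
      exact List.mem_of_mem_take hx
    have hseteq : ((y.take (i : ℕ)).map Prod.fst).toFinset =
        ((y.take (j : ℕ)).map Prod.fst).toFinset :=
      Finset.eq_of_subset_of_card_le hsub (le_of_eq hcardeq.symm)
    -- split the run
    have hsplitj : ERun rep p (y.take (j : ℕ)) ∧
        ERun rep (finSt p (y.take (j : ℕ))) (y.drop (j : ℕ)) := by
      rw [← erun_append]
      rw [List.take_append_drop]
      exact hrun
    have hspliti : ERun rep p (y.take (i : ℕ)) := by
      have : ERun rep p (y.take (i : ℕ) ++ y.drop (i : ℕ)) := by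
        rw [List.take_append_drop]; exact hrun
      exact ((erun_append rep _ _ p).mp this).1
    set y1 := y.take (i : ℕ) ++ y.drop (j : ℕ) with hy1
    have hrun1 : ERun rep p y1 := by
      rw [hy1, erun_append]
      exact ⟨hspliti, by rw [hst]; exact hsplitj.2⟩
    have hfin1 : finSt p y1 = finSt p y := by
      rw [hy1, finSt_append, hst, ← finSt_append, List.take_append_drop]
    have hset1 : (y1.map Prod.fst).toFinset = (y.map Prod.fst).toFinset := by
      rw [hy1]
      conv_rhs => rw [← List.take_append_drop (j : ℕ) y]
      simp only [List.map_append, List.toFinset_append]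
      rw [hseteq]
    have hlen1 : y1.length < y.length := by
      rw [hy1]
      simp only [List.length_append, List.length_take, List.length_drop]
      omega
    obtain ⟨y', a1, a2, a3, a4⟩ := ih y1 p (by omega) hrun1
    refine ⟨y', a1, a2.trans hfin1, a3.trans hset1, ?_⟩
    rw [hset1] at a4
    exact a4

/-! ### Misc lemmas -/

lemma flatMap_blk_flatten : ∀ es : List (ℕ × ℕ),
    (es.flatMap blk).flatten = (es.map gEdge).flatten := by
  intro es
  induction es with
  | nil => rfl
  | cons e es ih => simp [blk, gEdge, ih]

lemma encode_eq_flatten (k : ℕ) (es : List (ℕ × ℕ)) :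
    encode k es = (thresholdTok k :: es.flatMap blk).flatten := by
  rw [List.flatten_cons, flatMap_blk_flatten]
  rfl

lemma graphOf_congr {es1 es2 : List (ℕ × ℕ)} (h : es1.toFinset = es2.toFinset) :
    graphOf es1 = graphOf es2 := by
  have hmem : ∀ e : ℕ × ℕ, e ∈ es1 ↔ e ∈ es2 := fun e => by
    rw [← List.mem_toFinset, h, List.mem_toFinset]
  have hV1 : (es1.map Prod.fst).toFinset = (es2.map Prod.fst).toFinset := by
    ext a
    simp only [List.mem_toFinset, List.mem_map]
    constructor <;> rintro ⟨e, he, rfl⟩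
    · exact ⟨e, (hmem e).mp he, rfl⟩
    · exact ⟨e, (hmem e).mpr he, rfl⟩
  have hV2 : (es1.map Prod.snd).toFinset = (es2.map Prod.snd).toFinset := by
    ext a
    simp only [List.mem_toFinset, List.mem_map]
    constructor <;> rintro ⟨e, he, rfl⟩
    · exact ⟨e, (hmem e).mp he, rfl⟩
    · exact ⟨e, (hmem e).mpr he, rfl⟩
  have hE : ((es1.filter (fun e => e.1 ≠ e.2)).map (fun e => s(e.1, e.2))).toFinset =
      ((es2.filter (fun e => e.1 ≠ e.2)).map (fun e => s(e.1, e.2))).toFinset := by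
    ext a
    simp only [List.mem_toFinset, List.mem_map, List.mem_filter]
    constructor <;> rintro ⟨e, ⟨he, hne⟩, rfl⟩
    · exact ⟨e, ⟨(hmem e).mp he, hne⟩, rfl⟩
    · exact ⟨e, ⟨(hmem e).mpr he, hne⟩, rfl⟩
  show Graph'.mk _ _ = Graph'.mk _ _
  rw [hV1, hV2, hE]

end Stmt3Aux

open Stmt3Aux in
/-- With `m = |rep^E_M(Q²)|`, `n = max{|w| : w ∈ rep_M(Q²)}` and
`ℓ = |Q|²·(m+2)·m·2n + n`, every pair (graph, threshold) decoded from a word of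
`L(M̂_rep)` is already decoded from a word of `L(M̂_rep)` of length at most `ℓ`. -/
theorem stmt3 {Q : Type} [Fintype Q] (M : NFA' Q)
    (hEnc : M.lang ⊆ Enc) (hre : M.Reachable) (hco : M.CoReachable)
    (rep : Q → Q → Set Word) (hrep : IsRepFun M rep) (htok : TokenPreserving rep)
    (m n ℓ : ℕ)
    (hm : m = (edgeFactors rep).ncard)
    (hn : n = sSup { l : ℕ | ∃ w ∈ allReps rep, w.length = l })
    (hℓ : ℓ = (Fintype.card Q) ^ 2 * (m + 2) * m * (2 * n) + n) :
    ∀ (G : Graph') (k : ℕ),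
      (∃ w ∈ hatLang M rep, decodesTo w G k) ↔
        (∃ w ∈ hatLang M rep, w.length ≤ ℓ ∧ decodesTo w G k) := by
  intro G k
  constructor
  case mpr => rintro ⟨w, hw, -, hd⟩; exact ⟨w, hw, hd⟩
  rintro ⟨w, hw, es, rfl, hG⟩
  -- finiteness and length bounds
  have hfinAll : (allReps rep).Finite :=
    Set.finite_iUnion fun p => Set.finite_iUnion fun q => (hrep p q).1
  have hlenbd : ∀ w ∈ allReps rep, w.length ≤ n := by
    intro w hwmem
    have hSeq : { l : ℕ | ∃ w ∈ allReps rep, w.length = l } = List.length '' allReps rep := by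
      ext l; simp [Set.mem_image, eq_comm]
    have hSfin : ({ l : ℕ | ∃ w ∈ allReps rep, w.length = l }).Finite := by
      rw [hSeq]; exact hfinAll.image _
    rw [hn]
    exact le_csSup hSfin.bddAbove ⟨w, hwmem, rfl⟩
  have hef : (edgeFactors rep).Finite := by
    refine Set.finite_iUnion fun p => Set.finite_iUnion fun q => Set.finite_iUnion fun r => ?_
    have : { w : Word | ∃ x ∈ rep p q, ∃ y ∈ rep q r, w = x ++ y } =
        (fun pr : Word × Word => pr.1 ++ pr.2) '' ((rep p q) ×ˢ (rep q r)) := by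
      ext w
      simp only [Set.mem_setOf_eq, Set.mem_image, Set.mem_prod, Prod.exists]
      constructor
      · rintro ⟨x, hx, y, hy, rfl⟩; exact ⟨x, y, ⟨hx, hy⟩, rfl⟩
      · rintro ⟨x, y, ⟨hx, hy⟩, rfl⟩; exact ⟨x, hx, y, hy, rfl⟩
    rw [this]
    exact (((hrep p q).1.prod (hrep q r).1).image _)
  -- decompose the accepting run into tokens
  rw [hatLang_iff] at hw
  obtain ⟨z, hz, hF, hflat⟩ := hw
  have hz_tok : ∀ t ∈ z.map Prod.fst, IsToken t := by
    intro t ht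
    rw [List.mem_map] at ht
    obtain ⟨x, hx, rfl⟩ := ht
    have := trun_mem rep z M.q0 hz x hx
    rw [allReps] at this
    simp only [Set.mem_iUnion] at this
    obtain ⟨a, b, hab⟩ := this
    exact htok a b _ hab
  have hT_tok : ∀ t ∈ thresholdTok k :: es.flatMap blk, IsToken t := by
    intro t ht
    rcases List.mem_cons.mp ht with rfl | ht'
    · exact thresholdTok_isToken k
    · rw [List.mem_flatMap] at ht'
      obtain ⟨e, -, hte⟩ := ht'
      rcases (by simpa [blk] using hte : t = leftTok e.1 ∨ t = rightTok e.2) with rfl | rfl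
      · exact leftTok_isToken e.1
      · exact rightTok_isToken e.2
  have hlist : z.map Prod.fst = thresholdTok k :: es.flatMap blk :=
    tok_flatten_inj _ _ hz_tok hT_tok (by rw [← hflat, encode_eq_flatten])
  cases z with
  | nil => simp at hlist
  | cons x z1 =>
  rw [List.map_cons, List.cons.injEq] at hlist
  obtain ⟨hx1, hz1map⟩ := hlist
  -- convert to an edge run, pump it, and convert back
  obtain ⟨y, hy, hyst, hymap⟩ := t2e rep es z1 x.2 hz.2 hz1map
  obtain ⟨y', h1', h2', h3', h4'⟩ := pump rep y.length y x.2 le_rfl hy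
  obtain ⟨z2, hz2, hz2st, hz2map⟩ := e2t rep y' x.2 h1'
  set es' := y'.map Prod.fst with hes'
  refine ⟨encode k es', ?_, ?_, es', rfl, ?_⟩
  · -- membership in hatLang
    rw [hatLang_iff]
    refine ⟨(thresholdTok k, x.2) :: z2, ⟨hx1 ▸ hz.1, hz2⟩, ?_, ?_⟩
    · rw [finSt_cons, hz2st, h2', hyst]
      rw [finSt_cons] at hF
      exact hF
    · rw [encode_eq_flatten, ← hz2map, List.map_cons]
  · -- the length bound
    have hthr : (thresholdTok k).length ≤ n := by
      have hmem : thresholdTok k ∈ rep M.q0 x.2 := hx1 ▸ hz.1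
      exact hlenbd _ (mem_allReps hmem)
    have hbody : ((es'.map gEdge).flatten).length ≤ y'.length * (2 * n) :=
      erun_len hlenbd y' x.2 h1'
    have hlenw : (encode k es').length ≤ n + y'.length * (2 * n) := by
      have henc : encode k es' = thresholdTok k ++ (es'.map gEdge).flatten := rfl
      rw [henc, List.length_append]
      omega
    have hKm : (y.map Prod.fst).toFinset.card ≤ m := by
      have hsubef : (((y.map Prod.fst).toFinset.image gEdge : Finset Word) : Set Word) ⊆
          edgeFactors rep := by
        intro t ht
        simp only [Finset.coe_image, Set.mem_image, Finset.mem_coe, List.mem_toFinset] at ht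
        obtain ⟨e, he, rfl⟩ := ht
        exact erun_mem_edgeFactors rep y x.2 hy e he
      have hc1 : ((y.map Prod.fst).toFinset.image gEdge).card = (y.map Prod.fst).toFinset.card :=
        Finset.card_image_of_injective _ gEdge_inj
      have hc2 := Set.ncard_le_ncard hsubef hef
      rw [Set.ncard_coe_finset, hc1] at hc2
      rw [hm]
      exact hc2
    rcases Nat.eq_zero_or_pos y.length with hy0 | hypos
    · -- y is empty : the word is just the threshold token
      have hynil : y = [] := List.length_eq_zero_iff.mp hy0
      have hes'nil : es' = [] := by
        have hset0 : (y'.map Prod.fst).toFinset = ∅ := by rw [h3', hynil]; simp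
        exact List.toFinset_eq_empty_iff _ |>.mp hset0
      have hlen0 : (encode k es').length ≤ n := by
        rw [hes'nil]
        simpa [encode, thresholdTok] using hthr
      rw [hℓ]
      exact le_trans hlen0 (Nat.le_add_left n _)
    · -- y is nonempty, hence m ≥ 1
      have hm1 : 1 ≤ m := by
        obtain ⟨x0, y0, rfl⟩ : ∃ x0 y0, y = x0 :: y0 := by
          cases y with
          | nil => simp at hypos
          | cons a b => exact ⟨a, b, rfl⟩
        have hmm : gEdge x0.1 ∈ edgeFactors rep :=
          erun_mem_edgeFactors rep _ x.2 hy x0.1 (by simp)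
        have := (Set.ncard_pos hef).mpr ⟨_, hmm⟩
        omega
      have hQ1 : 1 ≤ Fintype.card Q := Fintype.card_pos_iff.mpr ⟨M.q0⟩
      have hyb : y'.length ≤ Fintype.card Q * (m + 1) :=
        le_trans h4' (Nat.mul_le_mul_left _ (by omega))
      have key : Fintype.card Q * (m + 1) ≤ (Fintype.card Q) ^ 2 * (m + 2) * m := by
        have hk1 : m + 1 ≤ (m + 2) * m := by nlinarith
        have hk2 : Fintype.card Q ≤ (Fintype.card Q) ^ 2 := by nlinarith
        calc Fintype.card Q * (m + 1) ≤ (Fintype.card Q) ^ 2 * ((m + 2) * m) :=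
              Nat.mul_le_mul hk2 hk1
          _ = (Fintype.card Q) ^ 2 * (m + 2) * m := by ring
      have hyb2 : y'.length ≤ (Fintype.card Q) ^ 2 * (m + 2) * m := le_trans hyb key
      calc (encode k es').length ≤ n + y'.length * (2 * n) := hlenw
        _ ≤ n + ((Fintype.card Q) ^ 2 * (m + 2) * m) * (2 * n) :=
            Nat.add_le_add_left (Nat.mul_le_mul_right _ hyb2) n
        _ = ℓ := by rw [hℓ]; ring
  · -- same decoded graph
    have hsets : es.toFinset = es'.toFinset := by
      rw [hes', h3', hymap]
    rw [hG]
    exact graphOf_congr hsets
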